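/- If |s/r| ≥ 1, then the sequence x with x_k = (1/r)(−s/r)^k f_{k+1}² belongs to ℓ_p(F̂(r,s)) (indeed F̂(r,s)x = (1,0,0,...)) but x is unbounded; hence ℓ_p(F̂(r,s)) is not contained in ℓ_∞. -/

import Mathlib

open scoped BigOperators
open Filter

noncomputable def fibs (n : ℕ) : ℝ := (Nat.fib (n + 1) : ℝ)

noncomputable def Fhat (r s : ℝ) (x : ℕ → ℝ) : ℕ → ℝ
  | 0 => r * x 0
  | n + 1 => r * (fibs (n + 1) / fibs (n + 2)) * x (n + 1)
      + s * (fibs (n + 2) / fibs (n + 1)) * x n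

lemma fibs_pos (n : ℕ) : 0 < fibs n := by
  unfold fibs
  exact_mod_cast Nat.fib_pos.mpr (Nat.succ_pos n)

lemma fibs_ne (n : ℕ) : fibs n ≠ 0 := (fibs_pos n).ne'

theorem lpFhat_not_subset_linfty (r s : ℝ) (hr : r ≠ 0) (hs : s ≠ 0)
    (h : 1 ≤ |s / r|) (p : ℝ) (hp : 1 ≤ p) (x : ℕ → ℝ)
    (hx : ∀ k, x k = (1 / r) * (-s / r) ^ k * (fibs (k + 1)) ^ 2) :
    (Fhat r s x = fun n => if n = 0 then 1 else 0) ∧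
    Summable (fun k => |Fhat r s x k| ^ p) ∧
    ¬ ∃ M : ℝ, ∀ k, |x k| ≤ M := by
  have hF : Fhat r s x = fun n => if n = 0 then 1 else 0 := by
    funext n
    cases n with
    | zero =>
        simp only [Fhat, hx 0, if_pos rfl]
        have : fibs 1 = 1 := by norm_num [fibs]
        rw [this]; field_simp
        simp
    | succ n =>
        simp only [Fhat, hx n, hx (n + 1), if_neg (Nat.succ_ne_zero n)]
        have h1 := fibs_ne (n + 1)
        have h2 := fibs_ne (n + 2)
        field_simp
        ring_nf
        field_simp
        ring
  refine ⟨hF, ?_, ?_⟩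
  · rw [hF]
    apply summable_of_ne_finset_zero (s := {0})
    intro k hk
    have hk0 : k ≠ 0 := by simpa using hk
    simp [hk0, Real.zero_rpow (by linarith : p ≠ 0)]
  · rintro ⟨M, hM⟩
    obtain ⟨N, hN⟩ := exists_nat_gt (max 5 (M * |r|))
    have hN5 : (5 : ℝ) < N := lt_of_le_of_lt (le_max_left _ _) hN
    have hN5' : 5 ≤ N := by exact_mod_cast hN5.le
    have hNM : M * |r| < N := lt_of_le_of_lt (le_max_right _ _) hN
    have hrpos : 0 < |r| := abs_pos.mpr hr
    -- |x N| ≥ N / |r|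
    have hfib : (N : ℝ) ≤ fibs (N + 1) := by
      unfold fibs
      have h2 : N ≤ Nat.fib (N + 2) :=
        le_trans (Nat.le_fib_self hN5') (Nat.fib_mono (by omega))
      exact_mod_cast h2
    have habs : |x N| = (1 / |r|) * |s / r| ^ N * (fibs (N + 1)) ^ 2 := by
      rw [hx N, abs_mul, abs_mul, abs_pow]
      rw [show |(-s / r)| = |s / r| by rw [abs_div, abs_div, abs_neg]]
      rw [abs_of_pos (by nlinarith [fibs_pos (N+1)] : (0:ℝ) < fibs (N+1) ^ 2)]
      rw [abs_div, abs_one]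
    have h1 : (1 : ℝ) ≤ |s / r| ^ N := one_le_pow₀ h
    have hNpos : (0 : ℝ) < N := by linarith
    have hxN : (N : ℝ) / |r| ≤ |x N| := by
      rw [habs]
      have hf2 : (N : ℝ) ≤ (fibs (N + 1)) ^ 2 := by
        nlinarith [fibs_pos (N + 1)]
      calc (N : ℝ) / |r| = (1 / |r|) * 1 * N := by ring
        _ ≤ (1 / |r|) * |s / r| ^ N * (fibs (N + 1)) ^ 2 := by
            apply mul_le_mul
            · exact mul_le_mul_of_nonneg_left h1 (by positivity)
            · exact hf2
            · positivity
            · positivity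
    have : M < (N : ℝ) / |r| := by
      rw [lt_div_iff₀ hrpos]; linarith
    exact absurd (hM N) (by linarith)
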